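/- Let n ≥ 1, k ≥ 1, ε > 0, and let C, σ : Fin n → Fin k be arbitrary functions. For i ∈ Fin k write C_i = {v : C(v) = i}, and let Y = {i : |C_i| ≥ εn/(4k)}. Suppose g : Fin k → Fin k satisfies, for every i ∈ Y, max_{j ∈ Fin k} |{v ∈ C_i : σ(v) = j}| ≤ |{v ∈ C_i : σ(v) = g(i)}| + (ε/4)·|C_i|. Then for every permutation π of Fin k, |{v : π(C(v)) = σ(v)}| ≤ |{v : g(C(v)) = σ(v)}| + (ε/2)·n. -/

import Mathlib

open Finset

lemma fiber_count (n k : ℕ) (C σ : Fin n → Fin k) (h : Fin k → Fin k) :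
    (univ.filter fun v => h (C v) = σ v).card =
      ∑ i, (univ.filter fun v => C v = i ∧ σ v = h i).card := by
  rw [Finset.card_eq_sum_card_fiberwise (f := C) (t := univ) (fun x _ => mem_univ _)]
  refine Finset.sum_congr rfl fun i _ => ?_
  congr 1
  rw [Finset.filter_filter]
  apply Finset.filter_congr
  intro v _
  constructor
  · rintro ⟨h1, h2⟩; exact ⟨h2, by rw [← h2, h1]⟩
  · rintro ⟨h1, h2⟩; exact ⟨by rw [h1, h2], h1⟩

/-- The deterministic counting argument in the proof of Proposition A.1:
a per-cluster near-plurality relabeling loses at most `ε/2` relative to the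
best permutation of the labels. -/
theorem stmt_3 (n k : ℕ) (hn : 1 ≤ n) (hk : 1 ≤ k) (ε : ℝ) (hε : 0 < ε)
    (C σ : Fin n → Fin k) (g : Fin k → Fin k)
    (hg : ∀ i : Fin k,
      (ε * n / (4 * k) : ℝ) ≤ (univ.filter fun v => C v = i).card →
      ∀ j : Fin k,
        ((univ.filter fun v => C v = i ∧ σ v = j).card : ℝ) ≤
          ((univ.filter fun v => C v = i ∧ σ v = g i).card : ℝ) +
            (ε / 4) * (univ.filter fun v => C v = i).card) :
    ∀ π : Equiv.Perm (Fin k),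
      ((univ.filter fun v => π (C v) = σ v).card : ℝ) ≤
        ((univ.filter fun v => g (C v) = σ v).card : ℝ) + (ε / 2) * n := by
  intro π
  have hsum : ∑ i : Fin k, ((univ.filter fun v => C v = i).card : ℝ) = n := by
    rw [← Nat.cast_sum]
    rw [← Finset.card_eq_sum_card_fiberwise (f := C) (t := univ) (fun x _ => mem_univ _)]
    simp
  rw [fiber_count n k C σ (π : Fin k → Fin k), fiber_count n k C σ g]
  push_cast
  have key : ∀ i : Fin k,
      ((univ.filter fun v => C v = i ∧ σ v = π i).card : ℝ) ≤
        ((univ.filter fun v => C v = i ∧ σ v = g i).card : ℝ)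
          + (ε / 4) * (univ.filter fun v => C v = i).card + ε * n / (4 * k) := by
    intro i
    by_cases hbig : (ε * n / (4 * k) : ℝ) ≤ (univ.filter fun v => C v = i).card
    · have := hg i hbig (π i)
      have hpos : (0:ℝ) ≤ ε * n / (4 * k) := by positivity
      linarith
    · push_neg at hbig
      have h1 : ((univ.filter fun v => C v = i ∧ σ v = π i).card : ℝ) ≤
          ((univ.filter fun v => C v = i).card : ℝ) := by
        have hsub : (univ.filter fun v => C v = i ∧ σ v = π i) ⊆
            (univ.filter fun v => C v = i) := by
          intro v hv
          rw [mem_filter] at hv ⊢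
          exact ⟨hv.1, hv.2.1⟩
        exact_mod_cast Finset.card_le_card hsub
      have h2 : (0:ℝ) ≤ ((univ.filter fun v => C v = i ∧ σ v = g i).card : ℝ) := by positivity
      have h3 : (0:ℝ) ≤ (ε / 4) * (univ.filter fun v => C v = i).card := by positivity
      linarith
  calc ∑ i : Fin k, ((univ.filter fun v => C v = i ∧ σ v = π i).card : ℝ)
      ≤ ∑ i : Fin k, (((univ.filter fun v => C v = i ∧ σ v = g i).card : ℝ)
          + (ε / 4) * (univ.filter fun v => C v = i).card + ε * n / (4 * k)) :=
        Finset.sum_le_sum fun i _ => key i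
    _ = (∑ i : Fin k, ((univ.filter fun v => C v = i ∧ σ v = g i).card : ℝ))
          + (ε / 4) * (∑ i : Fin k, ((univ.filter fun v => C v = i).card : ℝ))
          + k * (ε * n / (4 * k)) := by
        rw [Finset.sum_add_distrib, Finset.sum_add_distrib, Finset.mul_sum]
        simp [Finset.sum_const, mul_comm]
    _ ≤ (∑ i : Fin k, ((univ.filter fun v => C v = i ∧ σ v = g i).card : ℝ)) + (ε / 2) * n := by
        rw [hsum]
        have hk' : (k:ℝ) ≠ 0 := by positivity
        have : (k:ℝ) * (ε * n / (4 * k)) = ε * n / 4 := by field_simp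
        rw [this]; ring_nf; linarith
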